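/- For every positive integer n, ((n+2)²/((n+1)(n+3)))·exp((n+1)/(2(n+2)²)) > √(1 + 1/(n+1)); equivalently, (n+1)/(n+2)² > log((n+1)(n+3)²/(n+2)³). -/

import Mathlib

open Real

theorem stmt_16 (n : ℕ) (hn : 1 ≤ n) :
    (((n : ℝ) + 2) ^ 2 / (((n : ℝ) + 1) * ((n : ℝ) + 3))) *
        Real.exp (((n : ℝ) + 1) / (2 * ((n : ℝ) + 2) ^ 2)) >
      Real.sqrt (1 + 1 / ((n : ℝ) + 1)) ∧
    ((n : ℝ) + 1) / ((n : ℝ) + 2) ^ 2 >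
      Real.log (((n : ℝ) + 1) * ((n : ℝ) + 3) ^ 2 / ((n : ℝ) + 2) ^ 3) := by
  have ha : (1:ℝ) ≤ (n:ℝ) := by exact_mod_cast hn
  set a : ℝ := (n:ℝ) with hadef
  have h1 : (0:ℝ) < a + 1 := by linarith
  have h2 : (0:ℝ) < a + 2 := by linarith
  have h3 : (0:ℝ) < a + 3 := by linarith
  have hx : (0:ℝ) < (a+1)*(a+3)^2/(a+2)^3 := by positivity
  have hxne : (a+1)*(a+3)^2/(a+2)^3 ≠ 1 := by
    intro h
    rw [div_eq_one_iff_eq (by positivity)] at h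
    nlinarith
  have hlog : Real.log ((a+1)*(a+3)^2/(a+2)^3) < (a+1)*(a+3)^2/(a+2)^3 - 1 :=
    Real.log_lt_sub_one_of_pos hx hxne
  have hstep : (a+1)*(a+3)^2/(a+2)^3 - 1 ≤ (a+1)/(a+2)^2 := by
    rw [div_sub_one (by positivity), div_le_div_iff₀ (by positivity) (by positivity)]
    nlinarith
  have hsecond : (a+1)/(a+2)^2 > Real.log ((a+1)*(a+3)^2/(a+2)^3) := by linarith
  refine ⟨?_, hsecond⟩
  have hexp : (a+1)*(a+3)^2/(a+2)^3 < Real.exp ((a+1)/(a+2)^2) := by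
    calc (a+1)*(a+3)^2/(a+2)^3 = Real.exp (Real.log ((a+1)*(a+3)^2/(a+2)^3)) :=
          (Real.exp_log hx).symm
      _ < Real.exp ((a+1)/(a+2)^2) := Real.exp_lt_exp.mpr hsecond
  have hL : 0 < (a+2)^2/((a+1)*(a+3)) * Real.exp ((a+1)/(2*(a+2)^2)) := by positivity
  rw [gt_iff_lt, show (1 + 1/(a+1)) = (a+2)/(a+1) by field_simp; ring,
    Real.sqrt_lt' hL]
  have hsq : ((a+2)^2/((a+1)*(a+3)) * Real.exp ((a+1)/(2*(a+2)^2)))^2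
      = (a+2)^4/((a+1)^2*(a+3)^2) * Real.exp ((a+1)/(a+2)^2) := by
    rw [mul_pow, sq (Real.exp _), ← Real.exp_add]
    congr 1
    · field_simp
    · congr 1
      rw [div_add_div _ _ (by positivity) (by positivity), div_eq_div_iff (by positivity) (by positivity)]
      ring
  rw [hsq]
  have key : (a+2)^4/((a+1)^2*(a+3)^2) * ((a+1)*(a+3)^2/(a+2)^3) = (a+2)/(a+1) := by
    field_simp
  calc (a+2)/(a+1) = (a+2)^4/((a+1)^2*(a+3)^2) * ((a+1)*(a+3)^2/(a+2)^3) := key.symm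
    _ < (a+2)^4/((a+1)^2*(a+3)^2) * Real.exp ((a+1)/(a+2)^2) := by
        apply mul_lt_mul_of_pos_left hexp (by positivity)
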